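/- Let N_e, N_n be positive natural numbers. For each j ∈ Fin N_e let B_j and C_j be symmetric real N_n × N_n matrices, let R be a symmetric real N_n × N_n matrix, let G ∈ ℝ^{N_n}, let I : ℝ^{N_n} → ℝ^{N_e} be a linear map with transpose Iᵀ : ℝ^{N_e} → ℝ^{N_n}, and let S ∈ ℝ^{N_e} have strictly positive entries. Define A(κ, μ) = R + Σ_j κ_j B_j + Σ_j μ_j C_j, assume A = A(κ₀, μ₀) is invertible, and set Φ = A⁻¹ G. Equip ℝ^{N_e} with the weighted inner product ⟨u, v⟩_S = Σ_j S_j u_j v_j and ℝ^{N_e} × ℝ^{N_e} with the corresponding product inner product. For H ∈ ℝ^{N_e} define the adjoint field H̃ = −A⁻¹ Iᵀ (S ∘ μ₀ ∘ H), where ∘ is the componentwise product. Then for all perturbations (δκ, δμ), with δΦ = −A⁻¹(Σ_j δκ_j B_j + Σ_j δμ_j C_j)Φ, one has ⟨δμ ∘ (IΦ) + μ₀ ∘ (IδΦ), H⟩_S = ⟨δκ, ρ⟩_S + ⟨δμ, τ⟩_S, where ρ_j = (1/S_j) H̃ᵀ B_j Φ and τ_j = (1/S_j) H̃ᵀ C_j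 Φ + H_j (IΦ)_j. In other words, the map H ↦ (ρ, τ) is the adjoint, with respect to the S-weighted inner products, of the Fréchet derivative of the discrete optical forward map F(κ, μ) = μ ∘ I(A(κ, μ)⁻¹G) at (κ₀, μ₀). -/

import Mathlib

open Matrix

lemma my_sum_mulVec {n m ι : Type*} [Fintype n] [Fintype ι]
    (f : ι → Matrix m n ℝ) (x : n → ℝ) :
    (∑ j, f j) *ᵥ x = ∑ j, (f j) *ᵥ x := by
  ext i
  rw [Finset.sum_apply]
  simp only [Matrix.mulVec, dotProduct, Matrix.sum_apply, Finset.sum_mul]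
  exact Finset.sum_comm

lemma my_dotProduct_sum {n ι : Type*} [Fintype n] [Fintype ι]
    (u : n → ℝ) (v : ι → n → ℝ) :
    u ⬝ᵥ (∑ j, v j) = ∑ j, u ⬝ᵥ v j := by
  simp only [dotProduct, Finset.sum_apply, Finset.mul_sum]
  exact Finset.sum_comm

/-- The adjoint-then-discretise formula (prodtproj) is the adjoint
of the Jacobian of the discrete optical forward map with respect to the `S`-weighted
inner products: with `H̃ = -A⁻¹ Iᵀ (S ∘ μ₀ ∘ H)` and
`δΦ = -A⁻¹(∑ δκ_j B_j + ∑ δμ_j C_j)Φ`, for all `(δκ, δμ)`,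
`⟨δμ ∘ IΦ + μ₀ ∘ IδΦ, H⟩_S = ⟨δκ, ρ⟩_S + ⟨δμ, τ⟩_S` where
`ρ_j = (1/S_j) H̃ᵀ B_j Φ` and `τ_j = (1/S_j) H̃ᵀ C_j Φ + H_j (IΦ)_j`. -/
theorem discrete_optical_adjoint_formula
    (Ne Nn : ℕ) (hNe : 0 < Ne) (hNn : 0 < Nn)
    (B C : Fin Ne → Matrix (Fin Nn) (Fin Nn) ℝ)
    (hB : ∀ j, (B j).IsSymm) (hC : ∀ j, (C j).IsSymm)
    (R : Matrix (Fin Nn) (Fin Nn) ℝ) (hR : R.IsSymm)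
    (G : Fin Nn → ℝ)
    (I : (Fin Nn → ℝ) →ₗ[ℝ] (Fin Ne → ℝ))
    (It : (Fin Ne → ℝ) →ₗ[ℝ] (Fin Nn → ℝ))
    (hIt : ∀ (u : Fin Nn → ℝ) (v : Fin Ne → ℝ), (I u) ⬝ᵥ v = u ⬝ᵥ (It v))
    (S : Fin Ne → ℝ) (hS : ∀ j, 0 < S j)
    (A : Matrix (Fin Nn) (Fin Nn) ℝ)
    (κ₀ μ₀ : Fin Ne → ℝ)
    (hAdef : A = R + (∑ j, κ₀ j • B j) + (∑ j, μ₀ j • C j))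
    (hinv : IsUnit A)
    (Φ : Fin Nn → ℝ) (hΦ : Φ = A⁻¹ *ᵥ G)
    (H : Fin Ne → ℝ)
    (Ht : Fin Nn → ℝ) (hHt : Ht = -(A⁻¹ *ᵥ It (S * μ₀ * H))) :
    ∀ δκ δμ : Fin Ne → ℝ,
      (∑ j, S j * ((δμ * I Φ + μ₀ *
          I (-(A⁻¹ *ᵥ (((∑ j, δκ j • B j) + (∑ j, δμ j • C j)) *ᵥ Φ)))) j * H j)) =
        (∑ j, S j * (δκ j * ((1 / S j) * (Ht ⬝ᵥ (B j *ᵥ Φ))))) +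
          (∑ j, S j * (δμ j *
            ((1 / S j) * (Ht ⬝ᵥ (C j *ᵥ Φ)) + H j * (I Φ) j))) := by
  intro δκ δμ
  have hdet : IsUnit A.det := (Matrix.isUnit_iff_isUnit_det A).mp hinv
  have hB' : ∀ j, (B j)ᵀ = B j := fun j => (hB j).eq
  have hC' : ∀ j, (C j)ᵀ = C j := fun j => (hC j).eq
  have hAsymm : Aᵀ = A := by
    rw [hAdef]
    simp [Matrix.transpose_add, Matrix.transpose_sum, Matrix.transpose_smul,
      hR.eq, hB', hC']
  set M : Matrix (Fin Nn) (Fin Nn) ℝ := (∑ j, δκ j • B j) + (∑ j, δμ j • C j) with hM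
  set δΦ : Fin Nn → ℝ := -(A⁻¹ *ᵥ (M *ᵥ Φ)) with hδΦ
  -- the transpose trick
  have hItSμH : It (S * μ₀ * H) = -(A *ᵥ Ht) := by
    rw [hHt, Matrix.mulVec_neg, neg_neg, Matrix.mulVec_mulVec,
      Matrix.mul_nonsing_inv A hdet, Matrix.one_mulVec]
  have key : (I δΦ) ⬝ᵥ (S * μ₀ * H) = Ht ⬝ᵥ (M *ᵥ Φ) := by
    rw [hIt, hItSμH, hδΦ, neg_dotProduct_neg]
    have h1 : ∀ u, u ᵥ* A = A *ᵥ u := by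
      intro u
      conv_lhs => rw [← hAsymm]
      rw [Matrix.vecMul_transpose]
    rw [Matrix.dotProduct_mulVec, h1 _, Matrix.mulVec_mulVec,
      Matrix.mul_nonsing_inv A hdet, Matrix.one_mulVec, dotProduct_comm]
  -- expand the bilinear term
  have expand : Ht ⬝ᵥ (M *ᵥ Φ) =
      (∑ j, δκ j * (Ht ⬝ᵥ (B j *ᵥ Φ))) + (∑ j, δμ j * (Ht ⬝ᵥ (C j *ᵥ Φ))) := by
    rw [hM, Matrix.add_mulVec, dotProduct_add, my_sum_mulVec, my_sum_mulVec,
      my_dotProduct_sum, my_dotProduct_sum]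
    congr 1 <;> refine Finset.sum_congr rfl fun j _ => ?_ <;>
      rw [Matrix.smul_mulVec, dotProduct_smul, smul_eq_mul]
  -- split the left-hand side
  have hLHS : (∑ j, S j * ((δμ * I Φ + μ₀ * I δΦ) j * H j)) =
      (∑ j, S j * (δμ j * H j * (I Φ) j)) + (I δΦ) ⬝ᵥ (S * μ₀ * H) := by
    rw [dotProduct, ← Finset.sum_add_distrib]
    refine Finset.sum_congr rfl fun j _ => ?_
    simp only [Pi.add_apply, Pi.mul_apply]
    ring
  rw [hLHS, key, expand]
  have hSne : ∀ j, S j ≠ 0 := fun j => (hS j).ne'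
  have hRHS2 : (∑ j, S j * (δμ j * ((1 / S j) * (Ht ⬝ᵥ (C j *ᵥ Φ)) + H j * (I Φ) j))) =
      (∑ j, (δμ j * (Ht ⬝ᵥ (C j *ᵥ Φ)) + S j * (δμ j * H j * (I Φ) j))) := by
    refine Finset.sum_congr rfl fun j _ => ?_
    field_simp [hSne j]
  have hRHS1 : (∑ j, S j * (δκ j * ((1 / S j) * (Ht ⬝ᵥ (B j *ᵥ Φ))))) =
      (∑ j, δκ j * (Ht ⬝ᵥ (B j *ᵥ Φ))) := by
    refine Finset.sum_congr rfl fun j _ => ?_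
    field_simp [hSne j]
  rw [hRHS1, hRHS2, Finset.sum_add_distrib]
  ring
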